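/- arXiv:2409.12860 — 5 statements merged into one kernel-verified Lean document; each statement's English description precedes it below -/
import Mathlib

section
/- Let N > n > m ≥ 1 be positive integers, and let c_0, c_m, c_{m+1}, ..., c_n, c_N be complex numbers with c_0 ≠ 0 and c_N ≠ 0. Define R_1 := max{1, (|c_0| + ∑_{k=m}^n |c_k|)/|c_N|}. Then every complex root w of the polynomial p(w) = c_N w^N + ∑_{k=m}^n c_k w^k + c_0 satisfies |w| ≤ R_1^{1/(N−n)}. -/
/-- Upper bound on the roots of a polynomial
`p(w) = c_N w^N + ∑_{k=m}^n c_k w^k + c_0`. -/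
theorem root_upper_bound (N n m : ℕ) (hm : 1 ≤ m) (hmn : m < n) (hnN : n < N)
    (c : ℕ → ℂ) (hc0 : c 0 ≠ 0) (hcN : c N ≠ 0)
    (R₁ : ℝ)
    (hR₁ : R₁ = max 1 ((‖c 0‖ + ∑ k ∈ Finset.Icc m n, ‖c k‖) /
      ‖c N‖))
    (w : ℂ)
    (hw : c N * w ^ N + (∑ k ∈ Finset.Icc m n, c k * w ^ k) + c 0 = 0) :
    ‖w‖ ≤ R₁ ^ ((1 : ℝ) / (N - n : ℕ)) := by
  set r := ‖w‖ with hr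
  have habs : 0 ≤ r := norm_nonneg w
  have hd : 0 < N - n := by omega
  have hdR : (0:ℝ) < ((N - n : ℕ) : ℝ) := by exact_mod_cast hd
  have hR1 : 1 ≤ R₁ := hR₁ ▸ le_max_left _ _
  by_cases hr1 : r ≤ 1
  · calc r ≤ 1 := hr1
      _ ≤ R₁ ^ ((1:ℝ)/(N-n : ℕ)) := Real.one_le_rpow hR1 (by positivity)
  · push_neg at hr1
    have hrpos : 0 < r := lt_trans one_pos hr1
    have hcNpos : 0 < ‖c N‖ := by
      simpa [norm_pos_iff] using hcN
    set S : ℝ := ‖c 0‖ + ∑ k ∈ Finset.Icc m n, ‖c k‖ with hS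
    have hrN : ‖c N‖ * r ^ N ≤ S * r ^ n := by
      have h1 : c N * w ^ N = -((∑ k ∈ Finset.Icc m n, c k * w ^ k) + c 0) := by
        linear_combination hw
      have h2 : ‖c N‖ * r ^ N =
          ‖(∑ k ∈ Finset.Icc m n, c k * w ^ k) + c 0‖ := by
        rw [← norm_pow, ← norm_mul, h1, norm_neg]
      rw [h2]
      have e1 : ‖∑ k ∈ Finset.Icc m n, c k * w ^ k‖
          ≤ ∑ k ∈ Finset.Icc m n, ‖c k‖ * r ^ k := by
        refine le_trans (norm_sum_le _ _) (le_of_eq ?_)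
        simp [map_mul, map_pow, hr]
      have e2 : ∑ k ∈ Finset.Icc m n, ‖c k‖ * r ^ k
          ≤ ∑ k ∈ Finset.Icc m n, ‖c k‖ * r ^ n := by
        refine Finset.sum_le_sum fun k hk => ?_
        have hkn : k ≤ n := (Finset.mem_Icc.mp hk).2
        gcongr
        exact le_of_lt hr1
      have e3 : ‖c 0‖ ≤ ‖c 0‖ * r ^ n := by
        nlinarith [one_le_pow₀ (le_of_lt hr1) (n:=n), norm_nonneg (c 0)]
      calc ‖(∑ k ∈ Finset.Icc m n, c k * w ^ k) + c 0‖
          ≤ ‖∑ k ∈ Finset.Icc m n, c k * w ^ k‖ + ‖c 0‖ :=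
            norm_add_le _ _
        _ ≤ (∑ k ∈ Finset.Icc m n, ‖c k‖ * r ^ n) + ‖c 0‖ * r ^ n := by
            have := le_trans e1 e2; gcongr
        _ = S * r ^ n := by rw [hS, ← Finset.sum_mul]; ring
    have key : r ^ (N - n) ≤ R₁ := by
      have hpow : r ^ N = r ^ (N - n) * r ^ n := by
        rw [← pow_add]; congr 1; omega
      have hrn : 0 < r ^ n := pow_pos hrpos n
      have h3 : ‖c N‖ * r ^ (N - n) ≤ S := by
        have := hrN
        rw [hpow] at this
        nlinarith
      have h4 : r ^ (N - n) ≤ S / ‖c N‖ :=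
        (le_div_iff₀' hcNpos).mpr h3
      calc r ^ (N - n) ≤ S / ‖c N‖ := h4
        _ ≤ R₁ := hR₁ ▸ le_max_right _ _
    have h := Real.rpow_le_rpow (by positivity) key
      (le_of_lt (by positivity : (0:ℝ) < 1/((N-n : ℕ) : ℝ)))
    rwa [← Real.rpow_natCast r (N-n), ← Real.rpow_mul habs, mul_one_div,
      div_self (ne_of_gt hdR), Real.rpow_one] at h
end

section
/- Let N > n > m ≥ 1 be positive integers, and let c_0, c_m, c_{m+1}, ..., c_n, c_N be complex numbers with c_0 ≠ 0 and c_N ≠ 0. Define R_0 := min{1, |c_0|/(|c_N| + ∑_{k=m}^n |c_k|)}. Then every complex root w of the polynomial p(w) = c_N w^N + ∑_{k=m}^n c_k w^k + c_0 satisfies |w| ≥ R_0^{1/m}. -/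
/-- Lower bound on the roots of a polynomial
`p(w) = c_N w^N + ∑_{k=m}^n c_k w^k + c_0`. -/
theorem root_lower_bound (N n m : ℕ) (hm : 1 ≤ m) (hmn : m < n) (hnN : n < N)
    (c : ℕ → ℂ) (hc0 : c 0 ≠ 0) (hcN : c N ≠ 0)
    (R₀ : ℝ)
    (hR₀ : R₀ = min 1 (‖c 0‖ /
      (‖c N‖ + ∑ k ∈ Finset.Icc m n, ‖c k‖)))
    (w : ℂ)
    (hw : c N * w ^ N + (∑ k ∈ Finset.Icc m n, c k * w ^ k) + c 0 = 0) :
    R₀ ^ ((1 : ℝ) / (m : ℕ)) ≤ ‖w‖ := by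
  by_contra hcon
  push_neg at hcon
  set S : ℝ := ‖c N‖ + ∑ k ∈ Finset.Icc m n, ‖c k‖ with hS
  have hcNpos : 0 < ‖c N‖ := norm_pos_iff.mpr hcN
  have hsumnn : 0 ≤ ∑ k ∈ Finset.Icc m n, ‖c k‖ :=
    Finset.sum_nonneg fun k _ => norm_nonneg _
  have hSpos : 0 < S := by rw [hS]; linarith
  have hc0pos : 0 < ‖c 0‖ := norm_pos_iff.mpr hc0
  have hR0pos : 0 < R₀ := by
    rw [hR₀]; exact lt_min one_pos (div_pos hc0pos hSpos)
  have hR0le1 : R₀ ≤ 1 := hR₀ ▸ min_le_left _ _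
  have hR0div : R₀ ≤ ‖c 0‖ / S := hR₀ ▸ min_le_right _ _
  have hmne : m ≠ 0 := by omega
  have hrnn : 0 ≤ ‖w‖ := norm_nonneg _
  have hrlt1 : ‖w‖ < 1 :=
    lt_of_lt_of_le hcon (Real.rpow_le_one hR0pos.le hR0le1 (by positivity))
  have hrm : ‖w‖ ^ m < R₀ := by
    have h1 : ‖w‖ ^ m < (R₀ ^ ((1 : ℝ) / (m : ℕ))) ^ m :=
      pow_lt_pow_left₀ hcon hrnn hmne
    have h2 : (R₀ ^ ((1 : ℝ) / (m : ℕ))) ^ m = R₀ := by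
      rw [← Real.rpow_natCast (R₀ ^ ((1 : ℝ) / (m : ℕ))) m, ← Real.rpow_mul hR0pos.le]
      rw [one_div, inv_mul_cancel₀ (by exact_mod_cast hmne), Real.rpow_one]
    rwa [h2] at h1
  -- bound |c 0|
  have hkey : ‖c 0‖ ≤ S * ‖w‖ ^ m := by
    have h0 : c 0 = -(c N * w ^ N + ∑ k ∈ Finset.Icc m n, c k * w ^ k) := by
      linear_combination hw
    calc ‖c 0‖
        ≤ ‖c N * w ^ N‖ + ‖∑ k ∈ Finset.Icc m n, c k * w ^ k‖ := by
          rw [h0, norm_neg]; exact norm_add_le _ _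
      _ ≤ ‖c N‖ * ‖w‖ ^ m
          + ∑ k ∈ Finset.Icc m n, ‖c k‖ * ‖w‖ ^ m := by
          have hpow : ∀ k, m ≤ k → ‖w‖ ^ k ≤ ‖w‖ ^ m := fun k hk =>
            pow_le_pow_of_le_one hrnn hrlt1.le hk
          have h1 : ‖c N * w ^ N‖ ≤ ‖c N‖ * ‖w‖ ^ m := by
            rw [norm_mul, norm_pow]
            exact mul_le_mul_of_nonneg_left (hpow N (by omega)) (norm_nonneg _)
          have h2 : ‖∑ k ∈ Finset.Icc m n, c k * w ^ k‖
              ≤ ∑ k ∈ Finset.Icc m n, ‖c k‖ * ‖w‖ ^ m := by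
            refine le_trans (norm_sum_le _ _) (Finset.sum_le_sum fun k hk => ?_)
            rw [norm_mul, norm_pow]
            exact mul_le_mul_of_nonneg_left (hpow k (Finset.mem_Icc.mp hk).1)
              (norm_nonneg _)
          linarith
      _ = S * ‖w‖ ^ m := by rw [hS, add_mul, Finset.sum_mul]
  have hfin : S * ‖w‖ ^ m < ‖c 0‖ := by
    calc S * ‖w‖ ^ m < S * R₀ := by exact (mul_lt_mul_iff_right₀ hSpos).mpr hrm
      _ ≤ ‖c 0‖ := by
          rw [← le_div_iff₀' hSpos] at *
          exact hR0div
  linarith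
end

section
/- Let r_1, r_2 be real numbers such that 1, r_1, r_2 are linearly independent over ℚ. Then the set of points ({m·r_1}, {m·r_2}) ∈ ℝ², as m ranges over ℤ, is dense in the unit square [0,1]² (i.e., its closure contains [0,1]²), where {x} denotes the fractional part of x. -/
open Filter Topology Set

namespace KroneckerAux

/-- The additive subgroup `{(a + m r₁, b + m r₂) : a, b, m ∈ ℤ}` of `ℝ²`. -/
def S (r₁ r₂ : ℝ) : AddSubgroup (ℝ × ℝ) where
  carrier := {p | ∃ a b m : ℤ, p = ((a : ℝ) + (m : ℝ) * r₁, (b : ℝ) + (m : ℝ) * r₂)}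
  zero_mem' := ⟨0, 0, 0, by simp; rfl⟩
  add_mem' := by
    rintro p q ⟨a, b, m, rfl⟩ ⟨a', b', m', rfl⟩
    exact ⟨a + a', b + b', m + m', by push_cast; apply Prod.ext <;> simp <;> ring⟩
  neg_mem' := by
    rintro p ⟨a, b, m, rfl⟩
    exact ⟨-a, -b, -m, by push_cast; apply Prod.ext <;> simp <;> ring⟩

lemma mem_S {r₁ r₂ : ℝ} (a b m : ℤ) :
    ((a : ℝ) + (m : ℝ) * r₁, (b : ℝ) + (m : ℝ) * r₂) ∈ S r₁ r₂ := ⟨a, b, m, rfl⟩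

lemma fract_mem_S {r₁ r₂ : ℝ} (m : ℤ) :
    (Int.fract ((m : ℝ) * r₁), Int.fract ((m : ℝ) * r₂)) ∈ S r₁ r₂ := by
  refine ⟨-⌊(m : ℝ) * r₁⌋, -⌊(m : ℝ) * r₂⌋, m, ?_⟩
  have h1 : Int.fract ((m : ℝ) * r₁) = (-⌊(m : ℝ) * r₁⌋ : ℤ) + (m : ℝ) * r₁ := by
    rw [Int.fract]; push_cast; ring
  have h2 : Int.fract ((m : ℝ) * r₂) = (-⌊(m : ℝ) * r₂⌋ : ℤ) + (m : ℝ) * r₂ := by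
    rw [Int.fract]; push_cast; ring
  exact Prod.ext h1 h2

end KroneckerAux
namespace KroneckerAux

lemma dense_one_theta {θ : ℝ} (hθ : Irrational θ) :
    Dense {x : ℝ | ∃ a m : ℤ, x = (a : ℝ) + (m : ℝ) * θ} := by
  have hset : {x : ℝ | ∃ a m : ℤ, x = (a : ℝ) + (m : ℝ) * θ}
      = (AddSubgroup.closure ({1, θ} : Set ℝ) : Set ℝ) := by
    ext x
    simp only [Set.mem_setOf_eq, SetLike.mem_coe, AddSubgroup.mem_closure_pair]
    constructor
    · rintro ⟨a, m, rfl⟩; exact ⟨a, m, by simp [zsmul_eq_mul]⟩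
    · rintro ⟨a, m, rfl⟩; exact ⟨a, m, by simp [zsmul_eq_mul]⟩
  rw [hset]
  rcases AddSubgroup.dense_or_cyclic (AddSubgroup.closure ({1, θ} : Set ℝ)) with h | ⟨a, ha⟩
  · exact h
  · exfalso
    have h1 : (1 : ℝ) ∈ AddSubgroup.closure ({1, θ} : Set ℝ) :=
      AddSubgroup.subset_closure (by simp)
    have hθ' : θ ∈ AddSubgroup.closure ({1, θ} : Set ℝ) :=
      AddSubgroup.subset_closure (by simp)
    rw [ha, AddSubgroup.mem_closure_singleton] at h1 hθ'
    obtain ⟨n, hn⟩ := h1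
    obtain ⟨m, hm⟩ := hθ'
    have hn0 : (n : ℝ) ≠ 0 := by
      intro h
      rw [zsmul_eq_mul, h, zero_mul] at hn; exact one_ne_zero hn.symm
    refine hθ ⟨(m : ℚ) / (n : ℚ), ?_⟩
    rw [zsmul_eq_mul] at hn hm
    push_cast
    rw [div_eq_iff hn0, ← hm]
    have : a = 1 / (n : ℝ) := by field_simp [← hn]; linarith [hn]
    rw [this]; field_simp

lemma irrational_of_indep {r₁ r₂ : ℝ}
    (hindep : ∀ q₀ q₁ q₂ : ℚ,
      (q₀ : ℝ) + (q₁ : ℝ) * r₁ + (q₂ : ℝ) * r₂ = 0 → q₀ = 0 ∧ q₁ = 0 ∧ q₂ = 0) :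
    Irrational r₁ := by
  rintro ⟨q, hq⟩
  have := hindep q (-1) 0 (by push_cast; rw [hq]; ring)
  exact absurd this.2.1 (by norm_num)

lemma not_rat_comb {r₁ r₂ : ℝ}
    (hindep : ∀ q₀ q₁ q₂ : ℚ,
      (q₀ : ℝ) + (q₁ : ℝ) * r₁ + (q₂ : ℝ) * r₂ = 0 → q₀ = 0 ∧ q₁ = 0 ∧ q₂ = 0)
    (a b : ℚ) : r₂ ≠ (a : ℝ) + (b : ℝ) * r₁ := by
  intro h
  have := hindep a b (-1) (by push_cast; rw [h]; ring)
  exact absurd this.2.2 (by norm_num)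

end KroneckerAux
namespace KroneckerAux

lemma exists_small {r₁ r₂ : ℝ} (hr₁ : Irrational r₁) {ε : ℝ} (hε : 0 < ε) :
    ∃ g ∈ S r₁ r₂, g ≠ 0 ∧ ‖g‖ < ε := by
  obtain ⟨N, hN⟩ := exists_nat_gt (1 / ε)
  have hN0 : 0 < (N : ℝ) := lt_trans (by positivity) hN
  have hNε : 1 / (N : ℝ) < ε := by
    rw [div_lt_iff₀ hN0]
    rw [div_lt_iff₀ hε] at hN
    linarith [mul_comm ε (N : ℝ)]
  -- pigeonhole
  set f : ℤ → ℤ × ℤ := fun m =>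
    (⌊Int.fract ((m : ℝ) * r₁) * N⌋, ⌊Int.fract ((m : ℝ) * r₂) * N⌋) with hf
  have hmapsto : Set.MapsTo f Set.univ (Set.Icc ((0 : ℤ), (0 : ℤ)) ((N : ℤ) - 1, (N : ℤ) - 1)) := by
    intro m _
    have key : ∀ x : ℝ, 0 ≤ ⌊Int.fract x * N⌋ ∧ ⌊Int.fract x * N⌋ ≤ (N : ℤ) - 1 := by
      intro x
      constructor
      · exact Int.floor_nonneg.mpr (mul_nonneg (Int.fract_nonneg x) hN0.le)
      · have : Int.fract x * N < N := by
          nlinarith [Int.fract_lt_one x, Int.fract_nonneg x]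
        have := Int.floor_lt.mpr (by exact_mod_cast this)
        omega
    exact ⟨⟨(key _).1, (key _).1⟩, ⟨(key _).2, (key _).2⟩⟩
  obtain ⟨m, -, m', -, hne, heq⟩ :=
    Set.infinite_univ.exists_ne_map_eq_of_mapsTo hmapsto (Set.finite_Icc _ _)
  have habs : ∀ x y : ℝ, ⌊x * N⌋ = ⌊y * N⌋ → |x - y| < 1 / N := by
    intro x y h
    have := Int.abs_sub_lt_one_of_floor_eq_floor h
    rw [← sub_mul, abs_mul, abs_of_pos hN0] at this
    rw [lt_div_iff₀ hN0]
    exact this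
  have h1 : |Int.fract ((m : ℝ) * r₁) - Int.fract ((m' : ℝ) * r₁)| < 1 / N :=
    habs _ _ (congrArg Prod.fst heq)
  have h2 : |Int.fract ((m : ℝ) * r₂) - Int.fract ((m' : ℝ) * r₂)| < 1 / N :=
    habs _ _ (congrArg Prod.snd heq)
  refine ⟨(Int.fract ((m : ℝ) * r₁), Int.fract ((m : ℝ) * r₂)) -
      (Int.fract ((m' : ℝ) * r₁), Int.fract ((m' : ℝ) * r₂)),
    sub_mem (fract_mem_S m) (fract_mem_S m'), ?_, ?_⟩
  · intro h0
    have hfst : Int.fract ((m : ℝ) * r₁) = Int.fract ((m' : ℝ) * r₁) := by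
      have := congrArg Prod.fst h0
      simpa [sub_eq_zero] using this
    rw [Int.fract_eq_fract] at hfst
    obtain ⟨z, hz⟩ := hfst
    rw [← sub_mul] at hz
    have hmm' : ((m : ℝ) - (m' : ℝ)) ≠ 0 := by
      intro h; apply hne; exact_mod_cast sub_eq_zero.mp h
    refine hr₁ ⟨(z : ℚ) / ((m : ℚ) - (m' : ℚ)), ?_⟩
    push_cast
    rw [div_eq_iff hmm', mul_comm, hz]
  · rw [Prod.norm_def]
    simp only [Prod.fst_sub, Prod.snd_sub, Real.norm_eq_abs]
    exact max_lt (lt_trans h1 hNε) (lt_trans h2 hNε)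

end KroneckerAux
namespace KroneckerAux

lemma exists_line {r₁ r₂ : ℝ} (hr₁ : Irrational r₁) :
    ∃ u : ℝ × ℝ, ‖u‖ = 1 ∧ ∀ t : ℝ, t • u ∈ closure (S r₁ r₂ : Set (ℝ × ℝ)) := by
  have hsmall : ∀ n : ℕ, ∃ g : ℝ × ℝ, g ∈ S r₁ r₂ ∧ g ≠ 0 ∧ ‖g‖ < 1 / (n + 1) := by
    intro n
    obtain ⟨g, hg, h0, hlt⟩ := exists_small (r₂ := r₂) hr₁ (ε := 1 / (n + 1)) (by positivity)
    exact ⟨g, hg, h0, hlt⟩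
  choose g hgS hg0 hglt using hsmall
  have hgn : ∀ n, ‖g n‖ ≠ 0 := fun n => norm_ne_zero_iff.mpr (hg0 n)
  set v : ℕ → ℝ × ℝ := fun n => ‖g n‖⁻¹ • g n with hv
  have hvsph : ∀ n, v n ∈ Metric.sphere (0 : ℝ × ℝ) 1 := by
    intro n
    simp only [Metric.mem_sphere, dist_zero_right, hv, norm_smul, norm_inv, norm_norm]
    exact inv_mul_cancel₀ (hgn n)
  obtain ⟨u, husph, φ, hφ, hvu⟩ := (isCompact_sphere (0 : ℝ × ℝ) 1).tendsto_subseq hvsph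
  refine ⟨u, by simpa using husph, fun t => ?_⟩
  set c : ℕ → ℝ := fun k => ‖g (φ k)‖ with hc
  have hc0 : ∀ k, 0 < c k := fun k => (norm_nonneg _).lt_of_ne (Ne.symm (hgn (φ k)))
  set a : ℕ → ℝ := fun k => (⌊t / c k⌋ : ℝ) * c k with ha
  -- `a k → t`
  have hat : Tendsto a atTop (𝓝 t) := by
    have hbound : ∀ k, ‖a k - t‖ ≤ c k := by
      intro k
      have h1 : (⌊t / c k⌋ : ℝ) ≤ t / c k := Int.floor_le _
      have h2 : t / c k - 1 < ⌊t / c k⌋ := Int.sub_one_lt_floor _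
      rw [Real.norm_eq_abs, abs_le]
      have hak : a k = (⌊t / c k⌋ : ℝ) * c k := rfl
      rw [hak]
      constructor
      · have := mul_lt_mul_of_pos_right h2 (hc0 k)
        rw [sub_mul, div_mul_cancel₀ _ (hc0 k).ne', one_mul] at this
        linarith
      · have := mul_le_mul_of_nonneg_right h1 (hc0 k).le
        rw [div_mul_cancel₀ _ (hc0 k).ne'] at this
        linarith [(hc0 k).le]
    have hczero : Tendsto c atTop (𝓝 0) := by
      apply squeeze_zero (fun k => (hc0 k).le) (fun k => (hglt (φ k)).le.trans ?_)
      · exact tendsto_one_div_add_atTop_nhds_zero_nat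
      · have h3 : k ≤ φ k := hφ.le_apply
        have : (k : ℝ) + 1 ≤ (φ k : ℝ) + 1 := by
          have : (k : ℝ) ≤ (φ k : ℝ) := Nat.cast_le.mpr h3
          linarith
        apply one_div_le_one_div_of_le (by positivity) this
    have : Tendsto (fun k => a k - t) atTop (𝓝 0) := squeeze_zero_norm hbound hczero
    have h := this.add_const t
    simpa using h
  -- `a k • v (φ k) → t • u` and each term is in `S`
  have hten : Tendsto (fun k => a k • v (φ k)) atTop (𝓝 (t • u)) := hat.smul hvu
  refine mem_closure_of_tendsto hten (Filter.Eventually.of_forall fun k => ?_)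
  have : a k • v (φ k) = (⌊t / c k⌋ : ℤ) • g (φ k) := by
    rw [← Int.cast_smul_eq_zsmul ℝ]
    show ((⌊t / c k⌋ : ℝ) * ‖g (φ k)‖) • (‖g (φ k)‖⁻¹ • g (φ k)) = (⌊t / c k⌋ : ℝ) • g (φ k)
    rw [smul_smul, mul_assoc, mul_inv_cancel₀ (hgn (φ k)), mul_one]
  rw [this]
  exact SetLike.mem_coe.mpr (zsmul_mem (hgS (φ k)) _)

end KroneckerAux
namespace KroneckerAux

lemma dense_of_vertical {r₁ r₂ : ℝ} (hr₁ : Irrational r₁)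
    (hvert : ∀ y : ℝ, ((0 : ℝ), y) ∈ closure (S r₁ r₂ : Set (ℝ × ℝ))) :
    Dense (S r₁ r₂ : Set (ℝ × ℝ)) := by
  set D : Set ℝ := {x : ℝ | ∃ a m : ℤ, x = (a : ℝ) + (m : ℝ) * r₁} with hD
  have hDdense : Dense D := dense_one_theta hr₁
  have hGgrp : ∀ p q : ℝ × ℝ, p ∈ closure (S r₁ r₂ : Set (ℝ × ℝ)) →
      q ∈ closure (S r₁ r₂ : Set (ℝ × ℝ)) → p + q ∈ closure (S r₁ r₂ : Set (ℝ × ℝ)) := by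
    intro p q hp hq
    rw [← AddSubgroup.topologicalClosure_coe, SetLike.mem_coe] at hp hq ⊢
    exact add_mem hp hq
  have hsub : D ×ˢ (Set.univ : Set ℝ) ⊆ closure (S r₁ r₂ : Set (ℝ × ℝ)) := by
    rintro ⟨x, y⟩ ⟨⟨a, m, rfl⟩, -⟩
    have h1 : (((a : ℝ) + (m : ℝ) * r₁, ((0 : ℤ) : ℝ) + (m : ℝ) * r₂)) ∈
        closure (S r₁ r₂ : Set (ℝ × ℝ)) := subset_closure (mem_S a 0 m)
    have h2 := hvert (y - (((0 : ℤ) : ℝ) + (m : ℝ) * r₂))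
    have h3 := hGgrp _ _ h1 h2
    convert h3 using 2 <;> simp
  rw [dense_iff_closure_eq]
  have h := closure_mono hsub
  rw [closure_closure] at h
  apply Set.eq_univ_of_univ_subset
  calc (Set.univ : Set (ℝ × ℝ)) = closure (D ×ˢ (Set.univ : Set ℝ)) :=
        ((hDdense.prod dense_univ).closure_eq).symm
    _ ⊆ closure (S r₁ r₂ : Set (ℝ × ℝ)) := h

lemma dense_S {r₁ r₂ : ℝ}
    (hindep : ∀ q₀ q₁ q₂ : ℚ,
      (q₀ : ℝ) + (q₁ : ℝ) * r₁ + (q₂ : ℝ) * r₂ = 0 → q₀ = 0 ∧ q₁ = 0 ∧ q₂ = 0) :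
    Dense (S r₁ r₂ : Set (ℝ × ℝ)) := by
  have hr₁ : Irrational r₁ := irrational_of_indep hindep
  obtain ⟨u, hu1, hline⟩ := exists_line (r₂ := r₂) hr₁
  by_cases hu : u.1 = 0
  · -- vertical direction
    have hu2 : u.2 ≠ 0 := by
      intro h
      have : u = 0 := Prod.ext hu h
      rw [this] at hu1; simp at hu1
    apply dense_of_vertical hr₁
    intro y
    have := hline (y / u.2)
    convert this using 1
    apply Prod.ext
    · show (0 : ℝ) = ((y / u.2) • u).1
      simp [Prod.smul_fst, smul_eq_mul, hu]
    · show y = ((y / u.2) • u).2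
      simp [Prod.smul_snd, smul_eq_mul, div_mul_cancel₀ _ hu2]
  · -- direction with nonzero first coordinate; slope s
    set s : ℝ := u.2 / u.1 with hs
    have hlinept : ∀ t : ℝ, (t, t * s) ∈ closure (S r₁ r₂ : Set (ℝ × ℝ)) := by
      intro t
      have := hline (t / u.1)
      convert this using 1
      apply Prod.ext
      · show t = ((t / u.1) • u).1
        simp [Prod.smul_fst, smul_eq_mul, div_mul_cancel₀ _ hu]
      · show t * s = ((t / u.1) • u).2
        simp only [Prod.smul_snd, smul_eq_mul, hs]
        field_simp
    set Gc := (S r₁ r₂).topologicalClosure with hGc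
    have hGcCoe : (Gc : Set (ℝ × ℝ)) = closure (S r₁ r₂ : Set (ℝ × ℝ)) :=
      AddSubgroup.topologicalClosure_coe
    set F : AddSubgroup ℝ := Gc.comap (AddMonoidHom.inr ℝ ℝ) with hF
    have hFmem : ∀ y : ℝ, y ∈ F ↔ ((0 : ℝ), y) ∈ closure (S r₁ r₂ : Set (ℝ × ℝ)) := by
      intro y
      rw [hF, AddSubgroup.mem_comap]
      rw [← SetLike.mem_coe, hGcCoe]
      rfl
    have h1F : (1 : ℝ) ∈ F := by
      rw [hFmem]
      have := subset_closure (s := (S r₁ r₂ : Set (ℝ × ℝ))) (mem_S 0 1 0)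
      convert this using 2 <;> simp
    have hsF : s ∈ F := by
      rw [hFmem]
      have h1 := hlinept 1
      have h2 := subset_closure (s := (S r₁ r₂ : Set (ℝ × ℝ))) (mem_S 1 0 0)
      have h1' : ((1 : ℝ), 1 * s) ∈ Gc := by rw [← SetLike.mem_coe, hGcCoe]; exact h1
      have h2' : (((1:ℤ) : ℝ) + ((0:ℤ) : ℝ) * r₁, ((0:ℤ) : ℝ) + ((0:ℤ) : ℝ) * r₂) ∈ Gc := by
        rw [← SetLike.mem_coe, hGcCoe]; exact h2
      have := sub_mem h1' h2'
      rw [← SetLike.mem_coe, hGcCoe] at this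
      convert this using 2 <;> simp
    have hrsF : r₂ - s * r₁ ∈ F := by
      rw [hFmem]
      have h1 := hlinept r₁
      have h2 := subset_closure (s := (S r₁ r₂ : Set (ℝ × ℝ))) (mem_S 0 0 1)
      have h1' : (r₁, r₁ * s) ∈ Gc := by rw [← SetLike.mem_coe, hGcCoe]; exact h1
      have h2' : (((0:ℤ) : ℝ) + ((1:ℤ) : ℝ) * r₁, ((0:ℤ) : ℝ) + ((1:ℤ) : ℝ) * r₂) ∈ Gc := by
        rw [← SetLike.mem_coe, hGcCoe]; exact h2
      have := sub_mem h2' h1'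
      rw [← SetLike.mem_coe, hGcCoe] at this
      convert this using 2 <;> simp <;> ring
    have hFclosed : IsClosed (F : Set ℝ) := by
      have : (F : Set ℝ) = (fun y : ℝ => ((0 : ℝ), y)) ⁻¹' (Gc : Set (ℝ × ℝ)) := rfl
      rw [this]
      exact ((S r₁ r₂).isClosed_topologicalClosure).preimage
        (continuous_const.prodMk continuous_id)
    rcases AddSubgroup.dense_or_cyclic F with hdense | ⟨c, hc⟩
    · -- F dense hence all of ℝ: vertical line in closure
      have hFuniv : (F : Set ℝ) = Set.univ := by
        rw [← hFclosed.closure_eq, hdense.closure_eq]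
      apply dense_of_vertical hr₁
      intro y
      rw [← hFmem]
      have : y ∈ (F : Set ℝ) := by rw [hFuniv]; trivial
      exact this
    · -- F cyclic: contradiction with independence
      exfalso
      rw [hc, AddSubgroup.mem_closure_singleton] at h1F hsF hrsF
      obtain ⟨n, hn⟩ := h1F
      obtain ⟨p, hp⟩ := hsF
      obtain ⟨q, hq⟩ := hrsF
      have hn0 : (n : ℝ) ≠ 0 := by
        intro h
        rw [zsmul_eq_mul, h, zero_mul] at hn
        exact one_ne_zero hn.symm
      rw [zsmul_eq_mul] at hn hp hq
      have hcval : c = 1 / (n : ℝ) := by field_simp [← hn]; linarith [hn]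
      apply not_rat_comb hindep ((q : ℚ) / (n : ℚ)) ((p : ℚ) / (n : ℚ))
      have hsval : s = (p : ℝ) / (n : ℝ) := by rw [← hp, hcval]; ring
      have hqval : r₂ - s * r₁ = (q : ℝ) / (n : ℝ) := by rw [← hq, hcval]; ring
      push_cast
      rw [hsval] at hqval
      linarith [hqval]

end KroneckerAux

/-- If `1, r₁, r₂` are `ℚ`-linearly independent, then the points
`({m r₁}, {m r₂})`, `m ∈ ℤ`, are dense in the unit square. -/
theorem fract_dense_in_unit_square (r₁ r₂ : ℝ)
    (hindep : ∀ q₀ q₁ q₂ : ℚ,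
      (q₀ : ℝ) + (q₁ : ℝ) * r₁ + (q₂ : ℝ) * r₂ = 0 → q₀ = 0 ∧ q₁ = 0 ∧ q₂ = 0) :
    Set.Icc (0 : ℝ) 1 ×ˢ Set.Icc (0 : ℝ) 1 ⊆
      closure {p : ℝ × ℝ | ∃ m : ℤ, p = (Int.fract ((m : ℝ) * r₁), Int.fract ((m : ℝ) * r₂))} := by
  have hdense := KroneckerAux.dense_S hindep
  set D : Set (ℝ × ℝ) :=
    {p : ℝ × ℝ | ∃ m : ℤ, p = (Int.fract ((m : ℝ) * r₁), Int.fract ((m : ℝ) * r₂))} with hD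
  have hkey : Set.Ioo (0 : ℝ) 1 ×ˢ Set.Ioo (0 : ℝ) 1 ⊆ closure D := by
    rintro ⟨x, y⟩ ⟨hx, hy⟩
    rw [Metric.mem_closure_iff]
    intro ε hε
    set ε' : ℝ := min ε (min (min x (1 - x)) (min y (1 - y))) with hε'
    have hε'0 : 0 < ε' := by
      simp only [hε', lt_min_iff]
      exact ⟨hε, ⟨⟨hx.1, by linarith [hx.2]⟩, ⟨hy.1, by linarith [hy.2]⟩⟩⟩
    obtain ⟨sp, hspS, hspd⟩ := Metric.mem_closure_iff.mp (hdense (x, y)) ε' hε'0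
    obtain ⟨a, b, m, rfl⟩ := hspS
    have hd1 : |x - ((a : ℝ) + (m : ℝ) * r₁)| < ε' := by
      have := hspd
      rw [Prod.dist_eq, max_lt_iff] at this
      simpa [Real.dist_eq] using this.1
    have hd2 : |y - ((b : ℝ) + (m : ℝ) * r₂)| < ε' := by
      have := hspd
      rw [Prod.dist_eq, max_lt_iff] at this
      simpa [Real.dist_eq] using this.2
    have hε'x : ε' ≤ x := le_trans (min_le_right _ _)
      (le_trans (min_le_left _ _) (min_le_left _ _))
    have hε'x1 : ε' ≤ 1 - x := le_trans (min_le_right _ _)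
      (le_trans (min_le_left _ _) (min_le_right _ _))
    have hε'y : ε' ≤ y := le_trans (min_le_right _ _)
      (le_trans (min_le_right _ _) (min_le_left _ _))
    have hε'y1 : ε' ≤ 1 - y := le_trans (min_le_right _ _)
      (le_trans (min_le_right _ _) (min_le_right _ _))
    rw [abs_lt] at hd1 hd2
    have hs1 : (0 : ℝ) ≤ (a : ℝ) + (m : ℝ) * r₁ := by linarith
    have hs1' : (a : ℝ) + (m : ℝ) * r₁ < 1 := by linarith
    have hs2 : (0 : ℝ) ≤ (b : ℝ) + (m : ℝ) * r₂ := by linarith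
    have hs2' : (b : ℝ) + (m : ℝ) * r₂ < 1 := by linarith
    refine ⟨((a : ℝ) + (m : ℝ) * r₁, (b : ℝ) + (m : ℝ) * r₂), ⟨m, ?_⟩,
      lt_of_lt_of_le hspd (min_le_left _ _)⟩
    have hf1 : Int.fract ((m : ℝ) * r₁) = (a : ℝ) + (m : ℝ) * r₁ := by
      rw [← Int.fract_intCast_add a ((m : ℝ) * r₁)]
      exact Int.fract_eq_self.mpr ⟨hs1, hs1'⟩
    have hf2 : Int.fract ((m : ℝ) * r₂) = (b : ℝ) + (m : ℝ) * r₂ := by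
      rw [← Int.fract_intCast_add b ((m : ℝ) * r₂)]
      exact Int.fract_eq_self.mpr ⟨hs2, hs2'⟩
    rw [hf1, hf2]
  have h2 : Set.Icc (0 : ℝ) 1 ×ˢ Set.Icc (0 : ℝ) 1
      = closure (Set.Ioo (0 : ℝ) 1 ×ˢ Set.Ioo (0 : ℝ) 1) := by
    rw [closure_prod_eq, closure_Ioo (by norm_num : (0 : ℝ) ≠ 1)]
  rw [h2]
  calc closure (Set.Ioo (0 : ℝ) 1 ×ˢ Set.Ioo (0 : ℝ) 1) ⊆ closure (closure D) :=
        closure_mono hkey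
    _ = closure D := closure_closure
end

section
/- Let p ∈ ℂ[w_1, ..., w_n] be a non-zero polynomial and let r_1, ..., r_n be real numbers that are linearly independent over ℚ. Then the set { (w_1·exp(−r_1·z), ..., w_n·exp(−r_n·z)) : z ∈ ℂ, w = (w_1, ..., w_n) ∈ (ℂˣ)^n with p(w) = 0 } is an open subset of ℂ^n, where ℂˣ denotes the set of non-zero complex numbers. -/
open Complex Finset Metric

noncomputable def expChar (t : ℝ) : Multiplicative ℂ →* ℂ where
  toFun z := Complex.exp (t * Multiplicative.toAdd z)
  map_one' := by simp
  map_mul' x y := by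
    simp only [toAdd_mul, mul_add, Complex.exp_add]

theorem expChar_inj : Function.Injective expChar := by
  intro t t' h
  have h1 : (expChar t) (Multiplicative.ofAdd (1:ℂ))
      = (expChar t') (Multiplicative.ofAdd (1:ℂ)) := by rw [h]
  simp only [expChar, MonoidHom.coe_mk, OneHom.coe_mk, toAdd_ofAdd, mul_one] at h1
  have : ((Real.exp t : ℝ) : ℂ) = ((Real.exp t' : ℝ) : ℂ) := by
    rw [Complex.ofReal_exp, Complex.ofReal_exp]; exact h1
  exact Real.exp_injective (by exact_mod_cast this)

/-- If a finite exponential sum with distinct real frequencies vanishes identically,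
all coefficients vanish. -/
theorem expsum_coeffs_zero {ι : Type*} (s : Finset ι) (t : ι → ℝ)
    (ht : Set.InjOn t s) (b : ι → ℂ)
    (h : ∀ z : ℂ, ∑ α ∈ s, b α * Complex.exp (t α * z) = 0) :
    ∀ α ∈ s, b α = 0 := by
  classical
  -- work with the attached family to get global injectivity
  have hinj : Function.Injective (fun α : {x // x ∈ s} => expChar (t α)) := by
    intro a a' hE
    exact Subtype.ext (ht a.2 a'.2 (expChar_inj hE))
  have hli : LinearIndependent ℂ
      (fun α : {x // x ∈ s} => ((expChar (t α) : Multiplicative ℂ →* ℂ) : Multiplicative ℂ → ℂ)) :=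
    (linearIndependent_monoidHom (Multiplicative ℂ) ℂ).comp _ hinj
  have key := linearIndependent_iff'.mp hli Finset.univ (fun α => b α)
  have hsum : ∑ α : {x // x ∈ s}, b α •
      ((expChar (t α) : Multiplicative ℂ →* ℂ) : Multiplicative ℂ → ℂ) = 0 := by
    funext z
    have := h (Multiplicative.toAdd z)
    rw [← Finset.sum_attach s (fun α => b α * Complex.exp (t α * Multiplicative.toAdd z))] at this
    simpa [expChar, Finset.sum_apply] using this
  intro α hα
  exact key hsum ⟨α, hα⟩ (Finset.mem_univ _)

theorem freq_inj (n : ℕ) (r : Fin n → ℝ) (hindep : LinearIndependent ℚ r) :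
    Function.Injective (fun α : Fin n →₀ ℕ => ∑ i, (α i : ℝ) * r i) := by
  intro α β h
  simp only [] at h
  have key := Fintype.linearIndependent_iff.mp hindep (fun i => (α i : ℚ) - (β i : ℚ)) ?_
  · ext i
    have h2 := key i
    have h3 : (α i : ℚ) = (β i : ℚ) := by linarith
    exact_mod_cast h3
  · have e : ∑ i, ((α i : ℚ) - (β i : ℚ)) • r i
        = (∑ i, (α i : ℝ) * r i) - ∑ i, (β i : ℝ) * r i := by
      rw [← Finset.sum_sub_distrib]
      refine Finset.sum_congr rfl fun i _ => ?_
      rw [sub_smul, Rat.smul_def, Rat.smul_def]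
      push_cast
      ring
    rw [e, h, sub_self]

theorem eval_exp_eq (n : ℕ) (p : MvPolynomial (Fin n) ℂ) (r : Fin n → ℝ)
    (v : Fin n → ℂ) (z : ℂ) :
    MvPolynomial.eval (fun i => v i * Complex.exp (r i * z)) p
      = ∑ α ∈ p.support, MvPolynomial.coeff α p * ((∏ i, v i ^ α i) *
          Complex.exp ((∑ i, (α i : ℝ) * r i : ℝ) * z)) := by
  rw [MvPolynomial.eval_eq']
  refine Finset.sum_congr rfl fun α _ => ?_
  congr 1
  calc ∏ i, (v i * Complex.exp (r i * z)) ^ α i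
      = (∏ i, v i ^ α i) * ∏ i, Complex.exp ((α i : ℂ) * (r i * z)) := by
        rw [← Finset.prod_mul_distrib]
        exact Finset.prod_congr rfl fun i _ => by rw [mul_pow, Complex.exp_nat_mul]
    _ = (∏ i, v i ^ α i) * Complex.exp ((∑ i, (α i : ℝ) * r i : ℝ) * z) := by
        rw [← Complex.exp_sum]
        congr 1
        push_cast [Finset.sum_mul]
        ring_nf
        exact congrArg _ (Finset.sum_congr rfl fun i _ => by ring)

theorem exists_ne_zero (n : ℕ) (p : MvPolynomial (Fin n) ℂ) (hp : p ≠ 0)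
    (r : Fin n → ℝ) (hindep : LinearIndependent ℚ r) (v : Fin n → ℂ)
    (hv : ∀ i, v i ≠ 0) :
    ∃ z : ℂ, MvPolynomial.eval (fun i => v i * Complex.exp (r i * z)) p ≠ 0 := by
  by_contra hc
  push_neg at hc
  apply hp
  have hall := expsum_coeffs_zero p.support (fun α => ∑ i, (α i : ℝ) * r i)
      ((freq_inj n r hindep).injOn)
      (fun α => MvPolynomial.coeff α p * ∏ i, v i ^ α i) ?_
  · ext α
    simp only [MvPolynomial.coeff_zero]
    by_cases hα : α ∈ p.support
    · have h0 := hall α hα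
      have hprod : (∏ i, v i ^ α i) ≠ 0 :=
        Finset.prod_ne_zero_iff.mpr fun i _ => pow_ne_zero _ (hv i)
      exact (mul_eq_zero.mp h0).resolve_right hprod
    · exact MvPolynomial.notMem_support_iff.mp hα
  · intro z
    have := hc z
    rw [eval_exp_eq] at this
    simpa [mul_assoc] using this

noncomputable def evalExp (n : ℕ) (p : MvPolynomial (Fin n) ℂ) (r : Fin n → ℝ)
    (v : Fin n → ℂ) (z : ℂ) : ℂ :=
  MvPolynomial.eval (fun i => v i * Complex.exp (r i * z)) p

theorem evalExp_cont (n : ℕ) (p : MvPolynomial (Fin n) ℂ) (r : Fin n → ℝ) :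
    Continuous fun q : (Fin n → ℂ) × ℂ => evalExp n p r q.1 q.2 := by
  have : (fun q : (Fin n → ℂ) × ℂ => evalExp n p r q.1 q.2)
      = fun q : (Fin n → ℂ) × ℂ => ∑ α ∈ p.support, MvPolynomial.coeff α p *
          ((∏ i, q.1 i ^ α i) * Complex.exp ((∑ i, (α i : ℝ) * r i : ℝ) * q.2)) :=
    funext fun q => eval_exp_eq n p r q.1 q.2
  rw [this]
  refine continuous_finset_sum _ fun α _ => Continuous.mul continuous_const (Continuous.mul ?_ ?_)
  · exact continuous_finset_prod _ fun i _ => ((continuous_apply i).comp continuous_fst).pow _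
  · exact Complex.continuous_exp.comp (continuous_const.mul continuous_snd)

theorem evalExp_diff (n : ℕ) (p : MvPolynomial (Fin n) ℂ) (r : Fin n → ℝ)
    (v : Fin n → ℂ) : Differentiable ℂ (evalExp n p r v) := by
  have : evalExp n p r v = fun z => ∑ α ∈ p.support, MvPolynomial.coeff α p *
      ((∏ i, v i ^ α i) * Complex.exp ((∑ i, (α i : ℝ) * r i : ℝ) * z)) :=
    funext fun z => eval_exp_eq n p r v z
  rw [this]
  refine Differentiable.fun_sum fun α _ => Differentiable.const_mul (Differentiable.const_mul ?_ _) _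
  exact Complex.differentiable_exp.comp (differentiable_id.const_mul _)

set_option maxHeartbeats 1000000 in
/-- The set `{ (w₁ e^{-r₁ z}, ..., wₙ e^{-rₙ z}) : z ∈ ℂ, w ∈ (ℂˣ)ⁿ, p(w) = 0 }`
is open in `ℂⁿ`, when `p` is a non-zero polynomial and `r₁, ..., rₙ` are
`ℚ`-linearly independent reals. -/
theorem exp_orbit_of_zero_set_open (n : ℕ) (p : MvPolynomial (Fin n) ℂ) (hp : p ≠ 0)
    (r : Fin n → ℝ) (hindep : LinearIndependent ℚ r) :
    IsOpen {v : Fin n → ℂ | ∃ (z : ℂ) (w : Fin n → ℂ),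
      (∀ i, w i ≠ 0) ∧ MvPolynomial.eval w p = 0 ∧
      ∀ i, v i = w i * Complex.exp (-(r i) * z)} := by
  classical
  rw [isOpen_iff_forall_mem_open]
  rintro v₀ ⟨z₀, w, hw0, hwp, hvw⟩
  have hv₀ : ∀ i, v₀ i ≠ 0 := fun i => by
    rw [hvw i]; exact mul_ne_zero (hw0 i) (Complex.exp_ne_zero _)
  have hG0 : evalExp n p r v₀ z₀ = 0 := by
    have hwe : (fun i => v₀ i * Complex.exp (r i * z₀)) = w := by
      funext i
      rw [hvw i, mul_assoc, ← Complex.exp_add, neg_mul]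
      rw [neg_add_cancel, Complex.exp_zero, mul_one]
    rw [evalExp, hwe]; exact hwp
  have hne : ∃ z, evalExp n p r v₀ z ≠ 0 :=
    exists_ne_zero n p hp r hindep v₀ hv₀
  -- isolated zeros of `evalExp n p r v₀`
  have hiso : ∀ᶠ z in nhdsWithin z₀ {z₀}ᶜ, evalExp n p r v₀ z ≠ 0 := by
    rcases ((evalExp_diff n p r v₀).analyticAt z₀).eventually_eq_zero_or_eventually_ne_zero
      with h | h
    · exfalso
      obtain ⟨z₁, hz₁⟩ := hne
      have heq : Set.EqOn (evalExp n p r v₀) 0 Set.univ :=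
        AnalyticOnNhd.eqOn_zero_of_preconnected_of_eventuallyEq_zero
          (fun z _ => (evalExp_diff n p r v₀).analyticAt z) isPreconnected_univ
          (Set.mem_univ z₀) h
      exact hz₁ (heq (Set.mem_univ z₁))
    · exact h
  rw [eventually_nhdsWithin_iff, Metric.eventually_nhds_iff] at hiso
  obtain ⟨ε, hε, hball⟩ := hiso
  have hδ : 0 < ε / 2 := by positivity
  have hsph : ∀ z ∈ sphere z₀ (ε / 2), evalExp n p r v₀ z ≠ 0 := by
    intro z hz
    rw [mem_sphere] at hz
    refine hball (by rw [hz]; linarith) ?_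
    simp only [Set.mem_compl_iff, Set.mem_singleton_iff]
    intro hzz
    rw [hzz, dist_self] at hz
    linarith
  -- minimum on the sphere
  have hsphne : (sphere z₀ (ε / 2)).Nonempty := NormedSpace.sphere_nonempty.mpr hδ.le
  obtain ⟨z₁, hz₁mem, hz₁min⟩ := (isCompact_sphere z₀ (ε / 2)).exists_isMinOn hsphne
    ((evalExp_diff n p r v₀).continuous.norm.continuousOn)
  set m := ‖evalExp n p r v₀ z₁‖ with hmdef
  have hm : 0 < m := norm_pos_iff.mpr (hsph z₁ hz₁mem)
  have hmin : ∀ z ∈ sphere z₀ (ε / 2), m ≤ ‖evalExp n p r v₀ z‖ := fun z hz => hz₁min hz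
  -- tube lemma
  have hNopen : IsOpen {q : (Fin n → ℂ) × ℂ |
      ‖evalExp n p r q.1 q.2 - evalExp n p r v₀ q.2‖ < m / 2} :=
    isOpen_lt (Continuous.norm ((evalExp_cont n p r).sub
      ((evalExp_diff n p r v₀).continuous.comp continuous_snd))) continuous_const
  have hsub : ({v₀} : Set (Fin n → ℂ)) ×ˢ closedBall z₀ (ε / 2) ⊆
      {q : (Fin n → ℂ) × ℂ |
        ‖evalExp n p r q.1 q.2 - evalExp n p r v₀ q.2‖ < m / 2} := by
    rintro ⟨v, z⟩ ⟨hv, _⟩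
    rw [Set.mem_singleton_iff] at hv
    subst hv
    simp only [Set.mem_setOf_eq, sub_self, norm_zero]
    positivity
  obtain ⟨u, t, huo, _, hv₀u, hballt, hut⟩ :=
    generalized_tube_lemma isCompact_singleton (isCompact_closedBall z₀ (ε / 2)) hNopen hsub
  -- the final open neighbourhood
  have hopen2 : IsOpen {v : Fin n → ℂ | ∀ i, v i ≠ 0} := by
    rw [Set.setOf_forall]
    exact isOpen_iInter_of_finite fun i =>
      IsOpen.preimage (continuous_apply i) isOpen_compl_singleton
  refine ⟨u ∩ {v | ∀ i, v i ≠ 0}, ?_, huo.inter hopen2, hv₀u (Set.mem_singleton v₀), hv₀⟩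
  rintro v ⟨hvu, hvnz⟩
  have hclose : ∀ z ∈ closedBall z₀ (ε / 2),
      ‖evalExp n p r v z - evalExp n p r v₀ z‖ < m / 2 := by
    intro z hz
    have h := hut (show (v, z) ∈ u ×ˢ t from Set.mem_prod.mpr ⟨hvu, hballt hz⟩)
    simpa using h
  have hzero : ∃ z ∈ closedBall z₀ (ε / 2), evalExp n p r v z = 0 := by
    by_contra hc
    push_neg at hc
    have hd : DiffContOnCl ℂ (fun z => (evalExp n p r v z)⁻¹) (ball z₀ (ε / 2)) := by
      constructor
      · exact DifferentiableOn.inv ((evalExp_diff n p r v).differentiableOn)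
          (fun z hz => hc z (ball_subset_closedBall hz))
      · rw [closure_ball z₀ hδ.ne']
        exact ContinuousOn.inv₀ ((evalExp_diff n p r v).continuous.continuousOn) hc
    have hbound : ∀ z ∈ frontier (ball z₀ (ε / 2)),
        ‖(evalExp n p r v z)⁻¹‖ ≤ (m / 2)⁻¹ := by
      rw [frontier_ball z₀ hδ.ne']
      intro z hz
      have h2 : m ≤ ‖evalExp n p r v₀ z‖ := hmin z hz
      have h3 : ‖evalExp n p r v z - evalExp n p r v₀ z‖ < m / 2 :=
        hclose z (sphere_subset_closedBall hz)
      have h1 : m / 2 ≤ ‖evalExp n p r v z‖ := by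
        have h4 := norm_sub_norm_le (evalExp n p r v₀ z) (evalExp n p r v z)
        rw [← norm_neg, neg_sub] at h3
        linarith
      rw [norm_inv]
      exact inv_anti₀ (by positivity) h1
    have hz₀cl : z₀ ∈ closure (ball z₀ (ε / 2)) := subset_closure (mem_ball_self hδ)
    have hmax := Complex.norm_le_of_forall_mem_frontier_norm_le isBounded_ball hd hbound hz₀cl
    have hne0 : evalExp n p r v z₀ ≠ 0 := hc z₀ (mem_closedBall_self hδ.le)
    rw [norm_inv] at hmax
    have hpos : 0 < ‖evalExp n p r v z₀‖ := norm_pos_iff.mpr hne0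
    have h3 : m / 2 ≤ ‖evalExp n p r v z₀‖ := by
      by_contra h4
      push_neg at h4
      have := inv_strictAnti₀ hpos h4
      linarith
    have h5 : ‖evalExp n p r v z₀‖ < m / 2 := by
      have := hclose z₀ (mem_closedBall_self hδ.le)
      rwa [hG0, sub_zero] at this
    linarith
  obtain ⟨zs, _, hzs⟩ := hzero
  refine ⟨zs, fun i => v i * Complex.exp (r i * zs),
    fun i => mul_ne_zero (hvnz i) (Complex.exp_ne_zero _), hzs, fun i => ?_⟩
  rw [mul_assoc, ← Complex.exp_add, neg_mul]
  rw [add_neg_cancel, Complex.exp_zero, mul_one]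
end

section
/- Let p ∈ ℂ[w_1, ..., w_n] be a non-zero polynomial, let r_1, ..., r_n be real numbers linearly independent over ℚ, and let α_1, ..., α_n be non-zero complex numbers. Then the entire function F : ℂ → ℂ defined by F(z) = p(α_1·exp(r_1·z), ..., α_n·exp(r_n·z)) is not identically zero. -/
/-- The multiplicative character `z ↦ exp (a z)` on `(ℂ, +)`. -/
noncomputable def expMonoidHom (a : ℝ) : Multiplicative ℂ →* ℂ where
  toFun z := Complex.exp (a * Multiplicative.toAdd z)
  map_one' := by simp
  map_mul' x y := by
    simp [toAdd_mul, mul_add, Complex.exp_add]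

theorem expMonoidHom_injective : Function.Injective expMonoidHom := by
  intro a b hab
  have h1 : Complex.exp (a * 1) = Complex.exp (b * 1) := by
    have := congrFun (congrArg (fun f : Multiplicative ℂ →* ℂ => (f : Multiplicative ℂ → ℂ))
      hab) (Multiplicative.ofAdd (1 : ℂ))
    simpa [expMonoidHom] using this
  have h2 : Real.exp a = Real.exp b := by
    have := h1
    simp only [mul_one] at this
    exact_mod_cast (by rw [Complex.ofReal_exp, Complex.ofReal_exp, this] :
      ((Real.exp a : ℝ) : ℂ) = (Real.exp b : ℝ))
  exact Real.exp_injective h2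

/-- If `p` is a non-zero polynomial, `r₁, ..., rₙ` are `ℚ`-linearly independent
reals and `α₁, ..., αₙ` are non-zero complex numbers, then the entire function
`z ↦ p(α₁ e^{r₁ z}, ..., αₙ e^{rₙ z})` is not identically zero. -/
theorem exp_poly_not_identically_zero (n : ℕ) (p : MvPolynomial (Fin n) ℂ) (hp : p ≠ 0)
    (r : Fin n → ℝ) (hindep : LinearIndependent ℚ r)
    (α : Fin n → ℂ) (hα : ∀ i, α i ≠ 0) :
    ¬ ∀ z : ℂ, MvPolynomial.eval (fun i => α i * Complex.exp (r i * z)) p = 0 := by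
  classical
  intro hF
  -- the real exponent attached to a monomial
  set e : (Fin n →₀ ℕ) → ℝ := fun d => ∑ i, (d i : ℝ) * r i with he
  have einj : Function.Injective e := by
    intro d d' h
    have hli := Fintype.linearIndependent_iff.mp hindep
    have hz : ∑ i, (((d i : ℚ) - (d' i : ℚ)) • r i) = 0 := by
      have key : ∀ dd : Fin n →₀ ℕ, ∑ i, ((dd i : ℚ) • r i) = e dd := by
        intro dd
        apply Finset.sum_congr rfl
        intro i _
        rw [Rat.smul_def]
        push_cast
        ring
      simp only [sub_smul, Finset.sum_sub_distrib, key, h, sub_self]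
    have hall := hli _ hz
    ext i
    have := hall i
    have : (d i : ℚ) = (d' i : ℚ) := by linarith [sub_eq_zero.mp this]
    exact_mod_cast this
  -- linear independence of the exponential characters
  have li : LinearIndependent ℂ
      (fun d : p.support => ((expMonoidHom (e (d : Fin n →₀ ℕ))) : Multiplicative ℂ → ℂ)) := by
    refine (linearIndependent_monoidHom (Multiplicative ℂ) ℂ).comp
      (fun d : p.support => expMonoidHom (e (d : Fin n →₀ ℕ))) ?_
    intro a b hab
    exact Subtype.coe_injective (einj (expMonoidHom_injective hab))
  set c : (Fin n →₀ ℕ) → ℂ := fun d => p.coeff d * ∏ i, α i ^ d i with hc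
  have hsum : ∑ d : p.support,
      c d • ((expMonoidHom (e (d : Fin n →₀ ℕ))) : Multiplicative ℂ → ℂ) = 0 := by
    funext z
    simp only [Finset.sum_apply, Pi.smul_apply, Pi.zero_apply, smul_eq_mul]
    have hz := hF (Multiplicative.toAdd z)
    rw [MvPolynomial.eval_eq'] at hz
    rw [← hz, ← Finset.sum_attach p.support
      (fun d => MvPolynomial.coeff d p * ∏ i, (α i * Complex.exp (r i * Multiplicative.toAdd z)) ^ d i)]
    apply Finset.sum_congr rfl
    intro d _
    -- expand the product
    have hprod : ∏ i, (α i * Complex.exp ((r i : ℂ) * Multiplicative.toAdd z)) ^ (d : Fin n →₀ ℕ) i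
        = (∏ i, α i ^ (d : Fin n →₀ ℕ) i) * Complex.exp ((e (d : Fin n →₀ ℕ) : ℝ) * Multiplicative.toAdd z) := by
      rw [he]
      push_cast
      rw [Finset.sum_mul, Complex.exp_sum, ← Finset.prod_mul_distrib]
      apply Finset.prod_congr rfl
      intro i _
      rw [mul_pow, ← Complex.exp_nat_mul]
      ring_nf
    simp only [expMonoidHom, MonoidHom.coe_mk, OneHom.coe_mk, hc]
    rw [hprod]
    ring
  have hall := Fintype.linearIndependent_iff.mp li (fun d => c d) hsum
  apply hp
  apply MvPolynomial.ext
  intro d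
  rw [MvPolynomial.coeff_zero]
  by_cases hd : d ∈ p.support
  · have hcd := hall ⟨d, hd⟩
    have hprodne : (∏ i, α i ^ d i) ≠ 0 :=
      Finset.prod_ne_zero_iff.mpr fun i _ => pow_ne_zero _ (hα i)
    have := (mul_eq_zero.mp hcd).resolve_right hprodne
    exact this
  · exact MvPolynomial.notMem_support_iff.mp hd
end
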